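/- Let F be a free group and y a primitive (cyclically reduced) element. If y^j = β * y * β⁻¹ holds for some β ∈ F and integer j, then j = 1 and β ∈ ⟨y⟩. -/

import Mathlib

open scoped Pointwise

/-- An element `p` of a free group is primitive if it is nontrivial and its only
roots are `p` itself and `p⁻¹`. -/
def IsPrimitiveElt {A : Type*} (p : FreeGroup A) : Prop :=
  p ≠ 1 ∧ ∀ (w : FreeGroup A) (l : ℤ), w ^ l = p → w = p ∨ w = p⁻¹

/-- The coset `v·⟨p⟩ = {v * p^k : k ∈ ℤ}`. -/
def coset {A : Type*} (v p : FreeGroup A) : Set (FreeGroup A) :=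
  {x | ∃ k : ℤ, x = v * p ^ k}

/-- A free group element is cyclically reduced if its reduced word does not begin
and end with mutually inverse letters. -/
def CyclicallyReduced {A : Type*} [DecidableEq A] (w : FreeGroup A) : Prop :=
  ∀ x y : A × Bool, w.toWord.head? = some x → w.toWord.getLast? = some y →
    ¬(x.1 = y.1 ∧ x.2 = !y.2)


lemma aux_not_finOrder_of {ι : Type*} (i : ι) : ¬ IsOfFinOrder (FreeGroup.of i) := by
  intro h
  have h2 := (FreeGroup.lift (fun _ : ι => (Multiplicative.ofAdd (1 : ℤ)))).isOfFinOrder h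
  rw [FreeGroup.lift_apply_of] at h2
  obtain ⟨n, hn, he⟩ := isOfFinOrder_iff_pow_eq_one.1 h2
  have : Multiplicative.ofAdd ((n : ℤ)) = 1 := by
    simpa [← ofAdd_nsmul] using he
  simp at this
  omega

lemma aux_torsionfree {A : Type*} {x : FreeGroup A} (hx : x ≠ 1) {n : ℤ} (h : x ^ n = 1) :
    n = 0 := by
  classical
  by_contra hn
  have hfin : IsOfFinOrder x := by
    refine isOfFinOrder_iff_pow_eq_one.2 ⟨n.natAbs, Int.natAbs_pos.2 hn, ?_⟩
    have : x ^ ((n.natAbs : ℤ)) = 1 := by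
      rcases Int.natAbs_eq n with he | he
      · rw [← he, h]
      · rw [he] at h; rw [zpow_neg] at h
        exact inv_eq_one.1 h
    simpa [zpow_natCast] using this
  have hfs : (Subgroup.zpowers x : Set (FreeGroup A)).Finite := finite_zpowers.2 hfin
  haveI : Finite (Subgroup.zpowers x) := hfs.to_subtype
  obtain ⟨ι, ⟨b⟩⟩ := (inferInstance : IsFreeGroup (Subgroup.zpowers x)).nonempty_basis
  haveI : Finite (FreeGroup ι) := Finite.of_equiv _ b.repr.toEquiv
  set w : FreeGroup ι := b.repr ⟨x, Subgroup.mem_zpowers x⟩ with hw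
  have hw1 : w ≠ 1 := by
    simp only [hw, ne_eq, MulEquiv.map_eq_one_iff]
    intro hc
    exact hx (by simpa [Subtype.ext_iff] using hc)
  have hnil : w.toWord ≠ [] := fun hnil => hw1 (FreeGroup.toWord_eq_nil_iff.1 hnil)
  obtain ⟨⟨i, bb⟩, t, ht⟩ := List.exists_cons_of_ne_nil hnil
  exact aux_not_finOrder_of i (isOfFinOrder_of_finite _)

lemma aux_of_comm {ι : Type*} {i j : ι} (h : FreeGroup.of i * FreeGroup.of j
    = FreeGroup.of j * FreeGroup.of i) : i = j := by
  classical
  by_contra hne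
  set c1 : Equiv.Perm (Fin 3) := Equiv.swap 0 1 with hc1
  set c2 : Equiv.Perm (Fin 3) := Equiv.swap 1 2 with hc2
  have h2 := congrArg (FreeGroup.lift (fun x : ι => if x = i then c1 else if x = j then c2 else 1)) h
  rw [map_mul, map_mul, FreeGroup.lift_apply_of, FreeGroup.lift_apply_of, if_pos rfl,
    if_neg (Ne.symm hne), if_pos rfl, hc1, hc2] at h2
  exact absurd h2 (by decide)

lemma aux_mem_zpowers_of_commute {A : Type*} {y β : FreeGroup A}
    (hy : ∀ (w : FreeGroup A) (l : ℤ), w ^ l = y → w = y ∨ w = y⁻¹)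
    (hy1 : y ≠ 1) (hc : β * y = y * β) : β ∈ Subgroup.zpowers y := by
  classical
  set H := Subgroup.closure ({β, y} : Set (FreeGroup A)) with hH
  have hβH : β ∈ H := Subgroup.subset_closure (by simp)
  have hyH : y ∈ H := Subgroup.subset_closure (by simp)
  -- H is abelian
  have hcen : H ≤ Subgroup.centralizer ({β, y} : Set (FreeGroup A)) := by
    rw [hH, Subgroup.closure_le]
    intro g hg
    rw [SetLike.mem_coe, Subgroup.mem_centralizer_iff]
    rcases hg with rfl | hg
    · rintro m (rfl | hm)
      · rfl
      · simp at hm; subst hm; exact hc.symm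
    · simp at hg; subst hg
      rintro m (rfl | hm)
      · exact hc
      · simp at hm; subst hm; rfl
  have habel : ∀ a ∈ H, ∀ c ∈ H, a * c = c * a := by
    intro a ha c hcH
    have ha' := hcen ha
    rw [Subgroup.mem_centralizer_iff] at ha'
    have hc2 : H ≤ Subgroup.centralizer ({a} : Set (FreeGroup A)) := by
      rw [hH, Subgroup.closure_le]
      intro g hg
      rw [SetLike.mem_coe, Subgroup.mem_centralizer_iff]
      intro m hm
      rw [Set.mem_singleton_iff] at hm
      subst hm
      exact (ha' g hg).symm
    have hcc := hc2 hcH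
    rw [Subgroup.mem_centralizer_iff] at hcc
    exact hcc a rfl
  obtain ⟨ι, ⟨b⟩⟩ := (inferInstance : IsFreeGroup H).nonempty_basis
  haveI hsub : Subsingleton ι := by
    refine ⟨fun i j => aux_of_comm (i := i) (j := j) ?_⟩
    have hb : (b i : FreeGroup A) * (b j : FreeGroup A) = (b j : FreeGroup A) * b i :=
      habel _ (b i).2 _ (b j).2
    have hb2 : (b i) * (b j) = (b j) * (b i) := Subtype.ext hb
    have := congrArg b.repr hb2
    simpa [FreeGroupBasis.repr_apply_coe] using this
  rcases isEmpty_or_nonempty ι with hι | ⟨⟨i₀⟩⟩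
  · haveI : Subsingleton (FreeGroup ι) := by
      constructor
      intro a c
      have : ∀ g : FreeGroup ι, g = 1 := by
        intro g
        induction g with
        | C1 => rfl
        | of x => exact (hι.false x).elim
        | inv_of x ih => exact (hι.false x).elim
        | mul x z ihx ihz => rw [ihx, ihz, one_mul]
      rw [this a, this c]
    have : (⟨y, hyH⟩ : H) = 1 := b.repr.injective (Subsingleton.elim _ _)
    exact absurd (by simpa [Subtype.ext_iff] using this) hy1
  · have key : ∀ g : FreeGroup ι, ∃ k : ℤ, g = FreeGroup.of i₀ ^ k := by
      intro g
      induction g with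
      | C1 => exact ⟨0, rfl⟩
      | of x => exact ⟨1, by rw [Subsingleton.elim x i₀, zpow_one]⟩
      | inv_of x ih =>
        obtain ⟨k, hk⟩ := ih
        exact ⟨-k, by rw [hk, ← zpow_neg]⟩
      | mul x z ihx ihz =>
        obtain ⟨k, hk⟩ := ihx
        obtain ⟨l, hl⟩ := ihz
        exact ⟨k + l, by rw [hk, hl, zpow_add]⟩
    set z : H := b.repr.symm (FreeGroup.of i₀) with hz
    have keyH : ∀ h : H, ∃ k : ℤ, h = z ^ k := by
      intro h
      obtain ⟨k, hk⟩ := key (b.repr h)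
      refine ⟨k, ?_⟩
      have := congrArg b.repr.symm hk
      rwa [MulEquiv.symm_apply_apply, map_zpow] at this
    obtain ⟨k, hk⟩ := keyH ⟨y, hyH⟩
    have hzy : (z : FreeGroup A) ^ k = y := by
      have := congrArg (Subtype.val) hk
      simpa [SubgroupClass.coe_zpow] using this.symm
    obtain ⟨m, hm⟩ := keyH ⟨β, hβH⟩
    have hzβ : (z : FreeGroup A) ^ m = β := by
      have := congrArg (Subtype.val) hm
      simpa [SubgroupClass.coe_zpow] using this.symm
    rcases hy (z : FreeGroup A) k hzy with hzy' | hzy'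
    · exact ⟨m, by rw [← hzβ, hzy']⟩
    · exact ⟨-m, by rw [← hzβ, hzy', inv_zpow']⟩

theorem stmt1 {A : Type*} [DecidableEq A] (y β : FreeGroup A) (hy : IsPrimitiveElt y)
    (hcr : CyclicallyReduced y) (j : ℤ) (h : y ^ j = β * y * β⁻¹) :
    j = 1 ∧ β ∈ Subgroup.zpowers y := by
  obtain ⟨hy1, hyroots⟩ := hy
  have hw : (β⁻¹ * y * β) ^ j = y := by
    rw [show β⁻¹ * y * β = β⁻¹ * y * β⁻¹⁻¹ by rw [inv_inv], conj_zpow, inv_inv, h]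
    group
  rcases hyroots _ j hw with h1 | h1
  · -- β commutes with y
    have hc : β * y = y * β := by
      have h' := congrArg (fun t => β * t) h1
      simpa [mul_assoc] using h'.symm
    have hmem := aux_mem_zpowers_of_commute hyroots hy1 hc
    have hyy : y ^ j = y := by
      rw [h, hc, mul_assoc, mul_inv_cancel, mul_one]
    have : y ^ (j - 1) = 1 := by
      rw [zpow_sub, hyy, zpow_one, mul_inv_cancel]
    have := aux_torsionfree hy1 this
    exact ⟨by omega, hmem⟩
  · -- β⁻¹ y β = y⁻¹ : derive contradiction
    exfalso
    have h2 : β⁻¹ * y * β = y⁻¹ := h1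
    have hβ2 : (β * β) * y = y * (β * β) := by
      have h3 : β⁻¹ * y⁻¹ * β = y := by
        have := congrArg (fun t => t⁻¹) h2
        simpa [mul_assoc] using this
      have : β⁻¹ * (β⁻¹ * y * β) * β = y := by rw [h2, h3]
      have h4 := congrArg (fun t => (β * β) * t) this
      simp only [mul_assoc] at h4 ⊢
      rw [← h4]
      group
    have hmem := aux_mem_zpowers_of_commute hyroots hy1 hβ2
    obtain ⟨k, hk⟩ := hmem
    have hk' : β * β = y ^ k := hk.symm
    -- conjugate: β⁻¹ (y^k) β = y^(-k), but also = β*β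
    have hconj : β⁻¹ * y ^ k * β = y ^ (-k) := by
      rw [show β⁻¹ * y ^ k * β = (β⁻¹ * y * β⁻¹⁻¹) ^ k by rw [conj_zpow, inv_inv], inv_inv, h2,
        inv_zpow', ]
    have hββ : β⁻¹ * y ^ k * β = β * β := by
      rw [← hk']; group
    have hyk : y ^ (2 * k) = 1 := by
      have heq : y ^ (-k) = y ^ k := by rw [← hconj, hββ, hk']
      rw [two_mul, zpow_add]
      nth_rw 1 [← heq]
      rw [← zpow_add]
      simp
    have hk0 : k = 0 := by have := aux_torsionfree hy1 hyk; omega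
    have hβ1 : β = 1 := by
      have hβsq : β ^ (2 : ℤ) = 1 := by
        rw [hk0] at hk'
        rw [zpow_two, hk', zpow_zero]
      by_contra hβne
      have := aux_torsionfree hβne hβsq
      omega
    rw [hβ1] at h2
    rw [inv_one, one_mul, mul_one] at h2
    have hy2 : y ^ (2 : ℤ) = 1 := by
      have h6 := congrArg (fun t => t * y) h2
      simp only [inv_mul_cancel] at h6
      rw [zpow_two]
      exact h6
    have := aux_torsionfree hy1 hy2
    omega
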